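/- If R formed as the signed V-flip on E = V ⊗ W (sign ε, dim V = p, dim W = q) is used to define the Yang-Baxter character, then the normalized trace of ρ_R of the n-cycle equals ε^{n−1}/p^{n−1}; hence its Thoma parameters are α₁ = … = α_p = 1/p, β = 0 when ε = +1, and α = 0, β₁ = … = β_p = 1/p when ε = −1 (checking the Thoma formula χ(cₙ) = Σᵢ αᵢⁿ + (−1)^{n−1} βᵢⁿ). -/

import Mathlib

/-- The matrix of the signed `V`-flip `R`-matrix acting on legs `i, i+1` of
`E^{⊗n}`, where `E = V ⊗ W` with `dim V = p`, `dim W = q`, realized on the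
standard basis indexed by `Fin n → Fin p × Fin q`:
`R((v₁⊗w₁)⊗(v₂⊗w₂)) = ε (v₂⊗w₁)⊗(v₁⊗w₂)` (V-components at legs `i, i+1` are
swapped, all W-components and the other V-components are fixed). -/
def Rmat (p q n : ℕ) (ε : ℂ) (i : ℕ) :
    Matrix (Fin n → Fin p × Fin q) (Fin n → Fin p × Fin q) ℂ :=
  fun f g =>
    if (∀ k : Fin n, (f k).2 = (g k).2) ∧
        (∀ k : Fin n, k.val ≠ i → k.val ≠ i + 1 → (f k).1 = (g k).1) ∧
        (∀ k l : Fin n, k.val = i → l.val = i + 1 → (f k).1 = (g l).1 ∧ (f l).1 = (g k).1)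
      then ε else 0

namespace Aux19

variable (p q n : ℕ)

/-- Action of a permutation of legs on basis vectors, permuting only V-components. -/
def Ff (σ : Equiv.Perm (Fin n)) (f : Fin n → Fin p × Fin q) : Fin n → Fin p × Fin q :=
  fun k => ((f (σ k)).1, (f k).2)

/-- Corresponding 0-1 matrix. -/
def Pmat (σ : Equiv.Perm (Fin n)) :
    Matrix (Fin n → Fin p × Fin q) (Fin n → Fin p × Fin q) ℂ :=
  fun f g => if g = Ff p q n σ f then 1 else 0

def tau (i : ℕ) : Equiv.Perm (Fin n) :=
  if h : i + 1 < n then Equiv.swap ⟨i, Nat.lt_of_succ_lt h⟩ ⟨i + 1, h⟩ else 1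

lemma Ff_comp (σ σ' : Equiv.Perm (Fin n)) (f : Fin n → Fin p × Fin q) :
    Ff p q n σ' (Ff p q n σ f) = Ff p q n (σ * σ') f := by
  funext k; simp [Ff]

lemma Pmat_mul (σ σ' : Equiv.Perm (Fin n)) :
    Pmat p q n σ * Pmat p q n σ' = Pmat p q n (σ * σ') := by
  ext f g
  simp [Matrix.mul_apply, Pmat, ← Ff_comp]
  rw [Finset.sum_eq_single (Ff p q n σ f)]
  · simp
  · intro b _ hb; simp [hb]
  · simp

lemma Pmat_one : Pmat p q n 1 = 1 := by
  ext f g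
  simp only [Pmat, Matrix.one_apply]
  have : Ff p q n 1 f = f := by funext k; simp [Ff]
  rw [this, eq_comm]
  simp [eq_comm]

lemma Pmat_prod (l : List (Equiv.Perm (Fin n))) :
    (l.map (fun σ => Pmat p q n σ)).prod = Pmat p q n l.prod := by
  induction l with
  | nil => simp [Pmat_one]
  | cons a t ih => simp [ih, Pmat_mul]

lemma smul_Pmat_prod (ε : ℂ) (l : List (Equiv.Perm (Fin n))) :
    (l.map (fun σ => ε • Pmat p q n σ)).prod = ε ^ l.length • Pmat p q n l.prod := by
  induction l with
  | nil => simp [Pmat_one]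
  | cons a t ih =>
      simp only [List.map_cons, List.prod_cons, ih, List.length_cons, List.prod_cons]
      rw [smul_mul_assoc, mul_smul_comm, smul_smul, Pmat_mul, pow_succ']

lemma Rmat_eq (ε : ℂ) (i : ℕ) (hi : i + 1 < n) :
    Rmat p q n ε i = ε • Pmat p q n (tau n i) := by
  set a : Fin n := ⟨i, Nat.lt_of_succ_lt hi⟩
  set b : Fin n := ⟨i + 1, hi⟩
  have hab : a ≠ b := by simp [a, b, Fin.ext_iff]
  ext f g
  have htau : tau n i = Equiv.swap a b := by simp [tau, hi]; rfl
  simp only [Rmat, Matrix.smul_apply, Pmat, htau, smul_eq_mul, mul_ite, mul_one, mul_zero]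
  congr 1
  apply propext
  constructor
  · rintro ⟨h2, h1, h12⟩
    have h' := h12 a b rfl rfl
    funext k
    simp only [Ff]
    refine Prod.ext ?_ (h2 k).symm
    by_cases hka : k = a
    · rw [hka, Equiv.swap_apply_left]; exact h'.2.symm
    by_cases hkb : k = b
    · rw [hkb, Equiv.swap_apply_right]; exact h'.1.symm
    · rw [Equiv.swap_apply_of_ne_of_ne hka hkb]
      exact (h1 k (fun h => hka (Fin.ext h)) (fun h => hkb (Fin.ext h))).symm
  · rintro rfl
    refine ⟨fun k => rfl, fun k hk1 hk2 => ?_, fun k l hk hl => ?_⟩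
    · have hka : k ≠ a := fun h => hk1 (by rw [h])
      have hkb : k ≠ b := fun h => hk2 (by rw [h])
      simp [Ff, Equiv.swap_apply_of_ne_of_ne hka hkb]
    · have hka : k = a := Fin.ext hk
      have hlb : l = b := Fin.ext hl
      rw [hka, hlb]
      constructor
      · simp [Ff, Equiv.swap_apply_left]
      · simp [Ff, Equiv.swap_apply_right]

lemma cyc_fix (m : ℕ) (k : Fin n) (hk : m < k.val) :
    (((List.range m).map (tau n)).prod) k = k := by
  induction m with
  | zero => simp
  | succ m ih =>
      rw [List.range_succ, List.map_append, List.prod_append]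
      simp only [List.map_cons, List.map_nil, List.prod_cons, List.prod_nil, mul_one]
      have htk : tau n m k = k := by
        by_cases h : m + 1 < n
        · simp only [tau, dif_pos h]
          exact Equiv.swap_apply_of_ne_of_ne
            (fun hh => by simp [Fin.ext_iff] at hh; omega)
            (fun hh => by simp [Fin.ext_iff] at hh; omega)
        · simp [tau, h]
      rw [Equiv.Perm.mul_apply, htk]
      exact ih (by omega)

lemma cyc_apply (m : ℕ) (hm : m < n) (k : Fin n) (hk : k.val < m) :
    ((((List.range m).map (tau n)).prod) k).val = k.val + 1 := by
  induction m with
  | zero => omega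
  | succ m ih =>
      rw [List.range_succ, List.map_append, List.prod_append]
      simp only [List.map_cons, List.map_nil, List.prod_cons, List.prod_nil, mul_one]
      have hm1 : m + 1 < n := hm
      have htau : tau n m = Equiv.swap ⟨m, Nat.lt_of_succ_lt hm1⟩ ⟨m + 1, hm1⟩ := by
        simp [tau, hm1]
      rw [Equiv.Perm.mul_apply]
      by_cases hkm : k.val = m
      · have hk' : k = (⟨m, Nat.lt_of_succ_lt hm1⟩ : Fin n) := Fin.ext hkm
        rw [hk', htau, Equiv.swap_apply_left,
          cyc_fix n m (⟨m + 1, hm1⟩ : Fin n) (by simp)]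
      · have hne1 : k ≠ (⟨m, Nat.lt_of_succ_lt hm1⟩ : Fin n) := fun h => hkm (by rw [h])
        have hne2 : k ≠ (⟨m + 1, hm1⟩ : Fin n) := fun h => by
          have : k.val = m + 1 := by rw [h]
          omega
        rw [htau, Equiv.swap_apply_of_ne_of_ne hne1 hne2]
        exact ih (by omega) (by omega)

lemma fixed_iff (hn : 2 ≤ n) (f : Fin n → Fin p × Fin q) :
    f = Ff p q n (((List.range (n - 1)).map (tau n)).prod) f ↔
      ∀ k : Fin n, (f k).1 = (f ⟨0, by omega⟩).1 := by
  set c := (((List.range (n - 1)).map (tau n)).prod) with hc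
  constructor
  · intro h k
    have step : ∀ k : Fin n, (f k).1 = (f (c k)).1 := by
      intro k
      conv_lhs => rw [h]
      rfl
    suffices H : ∀ j (hj : j < n), (f ⟨j, hj⟩).1 = (f ⟨0, by omega⟩).1 by
      have := H k.val k.isLt
      simpa using this
    intro j
    induction j with
    | zero => intro hj; rfl
    | succ j ihj =>
        intro hj
        have hj' : j < n := by omega
        have hcj : c ⟨j, hj'⟩ = ⟨j + 1, hj⟩ := by
          apply Fin.ext
          rw [hc, cyc_apply n (n - 1) (by omega) ⟨j, hj'⟩ (by simp; omega)]
        have hst := step ⟨j, hj'⟩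
        rw [hcj] at hst
        rw [← hst]
        exact ihj hj'
  · intro h
    funext k
    simp only [Ff]
    exact Prod.ext (by rw [h k, h (c k)]) rfl

lemma card_fixed (hn : 2 ≤ n) :
    (Finset.univ.filter
        (fun f : Fin n → Fin p × Fin q => ∀ k : Fin n, (f k).1 = (f ⟨0, by omega⟩).1)).card
      = p * q ^ n := by
  rw [show p * q ^ n = Fintype.card (Fin p × (Fin n → Fin q)) by simp,
    ← Finset.card_univ]
  apply Finset.card_bij' (fun f _ => ((f ⟨0, by omega⟩).1, fun k => (f k).2))
    (fun x _ => fun k => (x.1, x.2 k))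
  · intro f _
    exact Finset.mem_univ _
  · intro x hx
    simp only [Finset.mem_filter, Finset.mem_univ, true_and] at hx
    funext k
    exact Prod.ext (hx k).symm rfl
  · intro x _
    rfl
  · intro x _
    simp [Finset.mem_filter]

end Aux19

/-- For `R` the `ε`-signed `V`-flip `R`-matrix (`dim V = p`, `dim W = q`), the
normalized trace of the Yang-Baxter representation of the `n`-cycle equals
`ε^{n−1}/p^{n−1}`; hence the Thoma parameters are `α₁ = ⋯ = α_p = 1/p, β = 0` when
`ε = 1`, and `α = 0, β₁ = ⋯ = β_p = 1/p` when `ε = −1`, as checked against Thoma's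
formula `χ(cₙ) = Σᵢ αᵢⁿ + (−1)^{n−1} Σᵢ βᵢⁿ`. -/
theorem stmt19 (p q n : ℕ) (hp : 0 < p) (hq : 0 < q) (hn : 2 ≤ n) (ε : ℂ)
    (hε : ε = 1 ∨ ε = -1) :
    Matrix.trace (((List.range (n - 1)).map (Rmat p q n ε)).prod) / ((p : ℂ) * q) ^ n
        = ε ^ (n - 1) / (p : ℂ) ^ (n - 1) ∧
      (ε = 1 →
        Matrix.trace (((List.range (n - 1)).map (Rmat p q n ε)).prod) / ((p : ℂ) * q) ^ n
          = ∑ _i : Fin p, ((1 : ℂ) / p) ^ n) ∧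
      (ε = -1 →
        Matrix.trace (((List.range (n - 1)).map (Rmat p q n ε)).prod) / ((p : ℂ) * q) ^ n
          = (-1 : ℂ) ^ (n - 1) * ∑ _i : Fin p, ((1 : ℂ) / p) ^ n) := by
  classical
  obtain ⟨m, rfl⟩ : ∃ m, n = m + 2 := ⟨n - 2, by omega⟩
  set n := m + 2 with hndef
  have hn1 : n - 1 = m + 1 := rfl
  set c := ((List.range (n - 1)).map (Aux19.tau n)).prod with hcdef
  have hprod : ((List.range (n - 1)).map (Rmat p q n ε)).prod
      = ε ^ (n - 1) • Aux19.Pmat p q n c := by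
    have h1 : (List.range (n - 1)).map (Rmat p q n ε)
        = (List.range (n - 1)).map (fun i => ε • Aux19.Pmat p q n (Aux19.tau n i)) := by
      apply List.map_congr_left
      intro i hi
      rw [List.mem_range] at hi
      exact Aux19.Rmat_eq p q n ε i (by omega)
    rw [h1,
      show (fun i => ε • Aux19.Pmat p q n (Aux19.tau n i))
        = (fun σ => ε • Aux19.Pmat p q n σ) ∘ (Aux19.tau n) from rfl,
      ← List.map_map, Aux19.smul_Pmat_prod, List.length_map, List.length_range]
  have htr : Matrix.trace (Aux19.Pmat p q n c) = ((p * q ^ n : ℕ) : ℂ) := by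
    rw [Matrix.trace]
    have hdiag : ∀ f : Fin n → Fin p × Fin q,
        Matrix.diag (Aux19.Pmat p q n c) f
          = if f = Aux19.Ff p q n c f then (1 : ℂ) else 0 := fun f => rfl
    rw [Finset.sum_congr rfl (fun f _ => hdiag f), Finset.sum_boole,
      Finset.filter_congr (fun f _ => Aux19.fixed_iff p q n (by omega) f),
      Aux19.card_fixed p q n (by omega)]
  have hptrace : Matrix.trace (((List.range (n - 1)).map (Rmat p q n ε)).prod)
      = ε ^ (n - 1) * ((p * q ^ n : ℕ) : ℂ) := by
    rw [hprod, Matrix.trace_smul, htr, smul_eq_mul]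
  have hp' : (p : ℂ) ≠ 0 := Nat.cast_ne_zero.mpr hp.ne'
  have hq' : (q : ℂ) ≠ 0 := Nat.cast_ne_zero.mpr hq.ne'
  have hmain : Matrix.trace (((List.range (n - 1)).map (Rmat p q n ε)).prod)
        / ((p : ℂ) * q) ^ n = ε ^ (n - 1) / (p : ℂ) ^ (n - 1) := by
    rw [hptrace, hn1]
    push_cast
    rw [hndef]
    field_simp
    ring
  have hsum : ∑ _i : Fin p, ((1 : ℂ) / p) ^ n = (p : ℂ) * ((1 : ℂ) / p) ^ n := by
    rw [Finset.sum_const, Finset.card_univ, Fintype.card_fin, nsmul_eq_mul]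
  refine ⟨hmain, fun h1 => ?_, fun h1 => ?_⟩
  · rw [hmain, h1, hsum, hn1, hndef]
    field_simp
    rw [show (p : ℂ) ^ (m + 1) * (p : ℂ) * (1 / (p : ℂ)) ^ (m + 2)
        = ((p : ℂ) * (1 / (p : ℂ))) ^ (m + 2) by ring, mul_one_div_cancel hp']
    simp
  · rw [hmain, h1, hsum, hn1, hndef]
    field_simp
    rw [show (p : ℂ) ^ (m + 1) * (p : ℂ) * (1 / (p : ℂ)) ^ (m + 2)
        = ((p : ℂ) * (1 / (p : ℂ))) ^ (m + 2) by ring, mul_one_div_cancel hp']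
    simp
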